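/- (1/(24π²)) ∫₀^{2π} ∫₀^{2π} log(10 − 8cos x − 2cos y) dx dy = (1/(6π)) ∫₀^{π} log(5 − cos x + √(cos²x − 10cos x + 9)) dx. -/

import Mathlib

open Real MeasureTheory intervalIntegral Complex

lemma cauchy_log {r : ℝ} (hr : 1 < r) :
    (∫ θ in (0:ℝ)..(2*π), Complex.log ((r:ℂ) - circleMap 0 1 θ)) = 2*π*Real.log r := by
  have hd : DiffContOnCl ℂ (fun z => Complex.log ((r:ℂ) - z)) (Metric.ball 0 1) := by
    apply DifferentiableOn.diffContOnCl
    intro z hz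
    rw [closure_ball 0 one_ne_zero] at hz
    have hre : 0 < ((r:ℂ) - z).re := by
      simp only [Complex.sub_re, Complex.ofReal_re]
      have := Complex.abs_re_le_norm z
      have hz1 : ‖z‖ ≤ 1 := by simpa using hz
      linarith [abs_le.1 (le_trans (Complex.abs_re_le_norm z) hz1) |>.2]
    exact ((Complex.differentiableAt_log (Complex.mem_slitPlane_iff.2 (Or.inl hre))).comp z
      ((differentiable_const _).sub differentiable_id).differentiableAt).differentiableWithinAt
  have := hd.circleIntegral_sub_inv_smul (Metric.mem_ball_self one_pos)
  rw [circleIntegral] at this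
  simp only [deriv_circleMap, sub_zero, smul_eq_mul] at this
  have h2 : ∀ θ : ℝ, circleMap 0 1 θ * Complex.I * ((circleMap 0 1 θ)⁻¹ * Complex.log ((r:ℂ) - circleMap 0 1 θ))
      = Complex.I * Complex.log ((r:ℂ) - circleMap 0 1 θ) := by
    intro θ
    have : circleMap 0 1 θ ≠ 0 := circleMap_ne_center one_ne_zero
    field_simp
  rw [intervalIntegral.integral_congr (fun θ _ => h2 θ), intervalIntegral.integral_const_mul] at this
  have h0 : Complex.log ((r:ℂ)) = (Real.log r : ℂ) :=
    (Complex.ofReal_log (by linarith)).symm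
  rw [h0] at this
  exact mul_left_cancel₀ Complex.I_ne_zero (by rw [this]; ring)

lemma cont_clog {r : ℝ} (hr : 1 < r) :
    Continuous (fun θ : ℝ => Complex.log ((r:ℂ) - circleMap 0 1 θ)) := by
  rw [continuous_iff_continuousAt]
  intro θ
  have hre : 0 < ((r:ℂ) - circleMap 0 1 θ).re := by
    simp [circleMap]
    nlinarith [Real.neg_one_le_cos θ, Real.cos_le_one θ]
  exact ((continuous_const.sub (continuous_circleMap 0 1)).continuousAt).clog
    (Complex.mem_slitPlane_iff.2 (Or.inl hre))

lemma lemA {r : ℝ} (hr : 1 < r) :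
    (∫ θ in (0:ℝ)..(2*π), Real.log (r^2 - 2*r*Real.cos θ + 1)) = 4*π*Real.log r := by
  have habs : ∀ θ : ℝ, r^2 - 2*r*Real.cos θ + 1 = ‖(r:ℂ) - circleMap 0 1 θ‖^2 := by
    intro θ
    rw [Complex.sq_norm, Complex.normSq_apply]
    simp [circleMap]
    nlinarith [Real.sin_sq_add_cos_sq θ]
  have key : (∫ θ in (0:ℝ)..(2*π), Real.log ‖(r:ℂ) - circleMap 0 1 θ‖) = 2*π*Real.log r := by
    have h1 := Complex.reCLM.intervalIntegral_comp_comm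
      ((cont_clog hr).intervalIntegrable (0:ℝ) (2*π)) (μ := volume)
    rw [cauchy_log hr] at h1
    simpa [Complex.log_re] using h1
  calc (∫ θ in (0:ℝ)..(2*π), Real.log (r^2 - 2*r*Real.cos θ + 1))
      = ∫ θ in (0:ℝ)..(2*π), 2 * Real.log ‖(r:ℂ) - circleMap 0 1 θ‖ := by
        apply intervalIntegral.integral_congr
        intro θ _
        simp only []
        rw [habs θ, Real.log_pow]
        push_cast; ring
    _ = 4*π*Real.log r := by rw [intervalIntegral.integral_const_mul, key]; ring

lemma inner_int {c : ℝ} (hc : c < 1) (hc' : -1 ≤ c) :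
    (∫ x in (0:ℝ)..(2*π), Real.log (10 - 8*Real.cos x - 2*c))
      = 2*π*Real.log (5 - c + Real.sqrt (c^2 - 10*c + 9)) := by
  set s := Real.sqrt (c^2 - 10*c + 9) with hs
  have hq : (0:ℝ) < c^2 - 10*c + 9 := by nlinarith
  have hs2 : s^2 = c^2 - 10*c + 9 := Real.sq_sqrt hq.le
  have hspos : 0 < s := Real.sqrt_pos.2 hq
  set r := (5 - c + s)/4 with hrdef
  have hr : 1 < r := by rw [hrdef]; nlinarith
  have hrs : (5 - c - s) * r = 4 := by rw [hrdef]; field_simp; nlinarith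
  have hposA : 0 < 5 - c - s := by nlinarith
  have hfact : ∀ x : ℝ, 10 - 8*Real.cos x - 2*c = (5 - c - s) * (r^2 - 2*r*Real.cos x + 1) := by
    intro x
    have h1 : (5 - c - s) * r^2 = 4 * r := by nlinarith
    have h4r : 4*r = 5 - c + s := by rw [hrdef]; ring
    linear_combination (-1)*h1 + 2*Real.cos x*hrs - h4r
  have hquad : ∀ x : ℝ, 0 < r^2 - 2*r*Real.cos x + 1 := by
    intro x
    nlinarith [Real.neg_one_le_cos x, Real.cos_le_one x, sq_nonneg (r - 1)]
  have hint : IntervalIntegrable (fun x => Real.log (r^2 - 2*r*Real.cos x + 1)) volume 0 (2*π) := by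
    apply Continuous.intervalIntegrable
    exact ((continuous_const.sub (continuous_const.mul Real.continuous_cos)).add
      continuous_const).log (fun x => (hquad x).ne')
  calc (∫ x in (0:ℝ)..(2*π), Real.log (10 - 8*Real.cos x - 2*c))
      = ∫ x in (0:ℝ)..(2*π), (Real.log (5 - c - s) + Real.log (r^2 - 2*r*Real.cos x + 1)) := by
        apply intervalIntegral.integral_congr
        intro x _
        simp only []
        rw [hfact x, Real.log_mul hposA.ne' (hquad x).ne']
    _ = 2*π*Real.log (5 - c + s) := by
        rw [intervalIntegral.integral_add (intervalIntegrable_const) hint,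
          intervalIntegral.integral_const, lemA hr]
        have h4 : Real.log (5 - c - s) + 2 * Real.log r = Real.log (5 - c + s) := by
          have hl2 : Real.log (r^2) = 2 * Real.log r := by
            rw [Real.log_pow]; norm_num
          rw [← hl2, ← Real.log_mul hposA.ne' (by positivity)]
          congr 1
          have h4r : 4*r = 5 - c + s := by rw [hrdef]; ring
          nlinarith [hrs]
        have hpi : (0:ℝ) < π := Real.pi_pos
        simp only [smul_eq_mul]
        nlinarith [h4]

lemma h_cont : Continuous (fun y : ℝ =>
    Real.log (5 - Real.cos y + Real.sqrt (Real.cos y ^ 2 - 10 * Real.cos y + 9))) := by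
  apply Continuous.log
  · exact (continuous_const.sub Real.continuous_cos).add
      (Real.continuous_sqrt.comp (by continuity))
  · intro y
    have h1 : Real.cos y ≤ 1 := Real.cos_le_one y
    have h2 : 0 ≤ Real.sqrt (Real.cos y ^ 2 - 10 * Real.cos y + 9) := Real.sqrt_nonneg _
    nlinarith

theorem double_integral_entropy :
    (1 / (24 * π ^ 2)) *
        ∫ y in (0:ℝ)..(2 * π), ∫ x in (0:ℝ)..(2 * π),
          Real.log (10 - 8 * Real.cos x - 2 * Real.cos y) =
      (1 / (6 * π)) * ∫ x in (0:ℝ)..π,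
        Real.log (5 - Real.cos x + Real.sqrt (Real.cos x ^ 2 - 10 * Real.cos x + 9)) := by
  set h : ℝ → ℝ := fun y =>
    Real.log (5 - Real.cos y + Real.sqrt (Real.cos y ^ 2 - 10 * Real.cos y + 9)) with hh
  have hNmeas : volume {y : ℝ | Real.cos y = 1} = 0 := by
    apply Set.Countable.measure_zero
    have hsub : {y : ℝ | Real.cos y = 1} ⊆ Set.range (fun n : ℤ => (n : ℝ) * (2 * π)) := by
      intro y hy
      obtain ⟨n, hn⟩ := (Real.cos_eq_one_iff y).1 hy
      exact ⟨n, hn⟩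
    exact Set.Countable.mono hsub (Set.countable_range _)
  have hae : ∀ᵐ y : ℝ, (∫ x in (0:ℝ)..(2*π), Real.log (10 - 8*Real.cos x - 2*Real.cos y))
      = 2*π*h y := by
    rw [MeasureTheory.ae_iff]
    apply MeasureTheory.measure_mono_null _ hNmeas
    intro y hy
    simp only [Set.mem_setOf_eq, not_iff_not] at hy ⊢
    by_contra hcy
    apply hy
    have hlt : Real.cos y < 1 := lt_of_le_of_ne (Real.cos_le_one y) hcy
    have := inner_int hlt (Real.neg_one_le_cos y)
    simpa [hh] using this
  have houter : (∫ y in (0:ℝ)..(2*π), ∫ x in (0:ℝ)..(2*π),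
      Real.log (10 - 8*Real.cos x - 2*Real.cos y)) = ∫ y in (0:ℝ)..(2*π), 2*π*h y := by
    apply intervalIntegral.integral_congr_ae
    filter_upwards [hae] with y hy _ using hy
  have hsplit : (∫ y in (0:ℝ)..(2*π), h y) = 2 * ∫ y in (0:ℝ)..π, h y := by
    have hint1 : IntervalIntegrable h volume 0 π := h_cont.intervalIntegrable _ _
    have hint2 : IntervalIntegrable h volume π (2*π) := h_cont.intervalIntegrable _ _
    have hadj := intervalIntegral.integral_add_adjacent_intervals hint1 hint2
    have hsym : (∫ y in π..(2*π), h y) = ∫ y in (0:ℝ)..π, h y := by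
      have hcl := intervalIntegral.integral_comp_sub_left (a := (0:ℝ)) (b := π) h (2*π)
      have : (∫ x in (0:ℝ)..π, h (2*π - x)) = ∫ x in (0:ℝ)..π, h x := by
        apply intervalIntegral.integral_congr
        intro x _
        simp only [hh, Real.cos_two_pi_sub]
      rw [this] at hcl
      rw [show (2*π - π) = π by ring, show (2*π - 0) = 2*π by ring] at hcl
      exact hcl.symm
    linarith [hadj, hsym]
  rw [houter, intervalIntegral.integral_const_mul, hsplit]
  have hpi : (0:ℝ) < π := Real.pi_pos
  field_simp
  ring
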